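/- For every nonempty packed word W of length ℓ there exists a unique pair (I, w) consisting of a nonempty subset I ⊆ {1,…,ℓ} and a packed word w (of length ℓ − |I|) such that W = φ_I(w). -/

import Mathlib

/-- The maximum letter of a word (a list of natural numbers), with `wmax [] = 0`. -/
def wmax (w : List ℕ) : ℕ := w.foldr max 0

/-- A word over the positive integers is packed if every letter from `1` to its maximum
occurs in it. -/
def IsPacked (w : List ℕ) : Prop :=
  (∀ x ∈ w, 0 < x) ∧ ∀ i : ℕ, 0 < i → i ≤ wmax w → i ∈ w

/-- `phi I w` inserts occurrences of the new maximum letter `wmax w + 1` so that they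
end up exactly at the (1-based) positions in `I`; the remaining positions carry the
letters of `w` in order. -/
def phi (I : Finset ℕ) (w : List ℕ) : List ℕ :=
  (List.range (w.length + I.card)).map (fun j =>
    if j + 1 ∈ I then wmax w + 1
    else w.getD ((List.range j).countP (fun k => decide (k + 1 ∉ I))) 0)

/-- The maximal letter of `w` occurs exactly at the (1-based) positions belonging to `I`. -/
def maxAt (w : List ℕ) (I : Finset ℕ) : Prop :=
  (∀ i ∈ I, 1 ≤ i ∧ i ≤ w.length) ∧
  ∀ j, j < w.length → (w.getD j 0 = wmax w ↔ j + 1 ∈ I)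


lemma le_wmax {w : List ℕ} {x : ℕ} (h : x ∈ w) : x ≤ wmax w := by
  induction w with
  | nil => simp at h
  | cons a t ih =>
    simp only [List.mem_cons] at h
    rcases h with rfl | h
    · simp [wmax]
    · have := ih h; simp only [wmax, List.foldr_cons] at *; omega

lemma wmax_le {w : List ℕ} {b : ℕ} (h : ∀ x ∈ w, x ≤ b) : wmax w ≤ b := by
  induction w with
  | nil => simp [wmax]
  | cons a t ih =>
    have h1 := h a (by simp)
    have h2 := ih (fun x hx => h x (by simp [hx]))
    simp only [wmax, List.foldr_cons] at *; omega

lemma getD_le_wmax (w : List ℕ) (c : ℕ) : w.getD c 0 ≤ wmax w := by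
  rcases lt_or_ge c w.length with h | h
  · exact le_wmax (by rw [List.getD_eq_getElem _ _ h]; exact List.getElem_mem h)
  · rw [List.getD_eq_default _ _ h]; exact Nat.zero_le _

lemma filter_getD (p : ℕ → Bool) :
    ∀ (l : List ℕ) (j : ℕ), j < l.length → p (l.getD j 0) = true →
    (l.filter p).getD ((List.range j).countP (fun k => p (l.getD k 0))) 0 = l.getD j 0 := by
  intro l
  induction l with
  | nil => simp
  | cons a t ih =>
    intro j hj hp
    cases j with
    | zero =>
      simp only [List.getD_cons_zero] at hp ⊢
      simp [List.filter_cons, hp]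
    | succ j =>
      rw [List.range_succ_eq_map]
      simp only [List.getD_cons_succ] at hp ⊢
      rw [List.countP_cons, List.countP_map]
      have hc : (List.countP ((fun k => p ((a :: t).getD k 0)) ∘ Nat.succ) (List.range j))
          = List.countP (fun k => p (t.getD k 0)) (List.range j) := by
        apply List.countP_congr; intro x _; simp [Function.comp]
      rw [hc]
      have hj' : j < t.length := by simpa using hj
      by_cases ha : p a = true
      · simp only [List.getD_cons_zero, ha, if_pos, List.filter_cons_of_pos ha]
        rw [List.getD_cons_succ]
        exact ih j hj' hp
      · rw [List.filter_cons_of_neg (by simpa using ha)]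
        simp only [List.getD_cons_zero, ha]
        simpa using ih j hj' hp

lemma countP_range_getD (p : ℕ → Bool) :
    ∀ (l : List ℕ), (List.range l.length).countP (fun k => p (l.getD k 0)) = l.countP p := by
  intro l
  induction l with
  | nil => simp
  | cons a t ih =>
    rw [List.length_cons, List.range_succ_eq_map, List.countP_cons, List.countP_map,
      List.countP_cons]
    have hc : (List.countP ((fun k => p ((a :: t).getD k 0)) ∘ Nat.succ) (List.range t.length))
        = List.countP (fun k => p (t.getD k 0)) (List.range t.length) := by
      apply List.countP_congr; intro x _; simp [Function.comp]
    rw [hc, ih]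
    simp [Nat.add_comm]

lemma exists_pos (P : ℕ → Bool) :
    ∀ n c, c < (List.range n).countP P → ∃ j, j < n ∧ (List.range j).countP P = c ∧ P j = true := by
  intro n
  induction n with
  | zero => simp
  | succ n ih =>
    intro c hc
    rw [List.range_succ, List.countP_append] at hc
    rcases lt_or_ge c ((List.range n).countP P) with h | h
    · obtain ⟨j, hj, h1, h2⟩ := ih c h
      exact ⟨j, by omega, h1, h2⟩
    · have hPn : P n = true := by
        by_contra hP
        simp [List.countP_singleton, hP] at hc; omega
      have : c = (List.range n).countP P := by
        simp [List.countP_singleton, hPn] at hc; omega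
      exact ⟨n, by omega, this.symm, hPn⟩

lemma countP_mem_card (I : Finset ℕ) (n : ℕ) (hI : I ⊆ Finset.Icc 1 n) :
    (List.range n).countP (fun k => decide (k + 1 ∈ I)) = I.card := by
  have h1 : (List.range n).countP (fun k => decide (k + 1 ∈ I))
      = ((Finset.range n).filter (fun k => k + 1 ∈ I)).card := by
    rw [Finset.card_filter]
    rw [Finset.sum_range]
    clear hI
    induction n with
    | zero => simp
    | succ m ihm =>
      rw [List.range_succ, List.countP_append, ihm, Fin.sum_univ_castSucc]
      simp [List.countP_singleton]
  rw [h1]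
  apply Finset.card_nbij (fun k => k + 1)
  · intro a ha; simp only [Finset.mem_coe, Finset.coe_filter, Finset.mem_filter, Finset.mem_range, Set.mem_setOf_eq] at ha; exact ha.2
  · intro a _ b _ h; simp only [add_left_inj] at h; exact h
  · intro i hi
    simp only [Finset.coe_filter, Finset.mem_range, Set.mem_setOf_eq] at *
    have := hI hi
    simp only [Finset.mem_Icc] at this
    exact ⟨i - 1, ⟨by omega, by rwa [Nat.sub_add_cancel this.1]⟩, by show i - 1 + 1 = i; omega⟩

lemma countP_not_mem (I : Finset ℕ) (n : ℕ) (hI : I ⊆ Finset.Icc 1 n) :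
    (List.range n).countP (fun k => decide (k + 1 ∉ I)) = n - I.card := by
  have h := List.length_eq_countP_add_countP (fun k => decide (k + 1 ∈ I)) (l := List.range n)
  rw [List.length_range, countP_mem_card I n hI] at h
  have hc : (List.range n).countP (fun k => decide (k + 1 ∉ I))
      = (List.range n).countP (fun a => decide ¬(decide (a + 1 ∈ I)) = true) := by
    apply List.countP_congr; intro x _; simp
  omega


lemma phi_length (I : Finset ℕ) (w : List ℕ) : (phi I w).length = w.length + I.card := by
  simp [phi]

lemma phi_getD (I : Finset ℕ) (w : List ℕ) (j : ℕ) (h : j < w.length + I.card) :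
    (phi I w).getD j 0 =
      if j + 1 ∈ I then wmax w + 1
      else w.getD ((List.range j).countP (fun k => decide (k + 1 ∉ I))) 0 := by
  rw [List.getD_eq_getElem _ _ (by simpa [phi_length] using h)]
  simp [phi]

theorem unique_phi_decomposition (W : List ℕ) (hW : IsPacked W) (hne : W ≠ []) :
    ∃! p : Finset ℕ × List ℕ,
      p.1.Nonempty ∧ p.1 ⊆ Finset.Icc 1 W.length ∧ IsPacked p.2 ∧ W = phi p.1 p.2 := by
  set n := W.length with hn
  set M := wmax W with hM
  have hM1 : 1 ≤ M := by
    have hx : W.head hne ∈ W := List.head_mem hne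
    exact le_trans (hW.1 _ hx) (le_wmax hx)
  -- the candidate pair
  set I₀ : Finset ℕ := (Finset.Icc 1 n).filter (fun i => W.getD (i - 1) 0 = M) with hI₀
  set w₀ : List ℕ := W.filter (fun x => decide (x ≠ M)) with hw₀
  have kI : ∀ i, i ∈ I₀ ↔ (1 ≤ i ∧ i ≤ n ∧ W.getD (i - 1) 0 = M) := by
    intro i; simp [hI₀, Finset.mem_filter, Finset.mem_Icc, and_assoc]
  have kI' : ∀ j, j < n → (j + 1 ∈ I₀ ↔ W.getD j 0 = M) := by
    intro j hj; rw [kI]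
    exact ⟨fun h => h.2.2, fun h => ⟨by omega, by omega, h⟩⟩
  have hI₀sub : I₀ ⊆ Finset.Icc 1 n := Finset.filter_subset _ _
  have hw₀mem : ∀ x ∈ w₀, x ∈ W ∧ x ≠ M := by
    intro x hx; rw [hw₀, List.mem_filter] at hx
    exact ⟨hx.1, by simpa using hx.2⟩
  have hw₀max : wmax w₀ + 1 = M := by
    have h1 : wmax w₀ ≤ M - 1 := by
      apply wmax_le
      intro x hx
      obtain ⟨hxW, hxM⟩ := hw₀mem x hx
      have := le_wmax hxW
      omega
    have h2 : M - 1 ≤ wmax w₀ := by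
      rcases Nat.eq_or_lt_of_le hM1 with h | h
      · omega
      · have hmem : M - 1 ∈ W := hW.2 (M - 1) (by omega) (by omega)
        have : M - 1 ∈ w₀ := by
          rw [hw₀, List.mem_filter]
          exact ⟨hmem, by simp; omega⟩
        exact le_wmax this
    omega
  have hw₀packed : IsPacked w₀ := by
    constructor
    · intro x hx; exact hW.1 x (hw₀mem x hx).1
    · intro i hi hi2
      rw [hw₀, List.mem_filter]
      refine ⟨hW.2 i hi (by omega), by simp; omega⟩
  have hcard : (List.range n).countP (fun k => decide (k + 1 ∈ I₀))
      = W.countP (fun x => decide (x = M)) := by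
    rw [← countP_range_getD (fun x => decide (x = M)) W]
    apply List.countP_congr
    intro k hk
    rw [List.mem_range] at hk
    simp only [decide_eq_true_eq]
    exact kI' k hk
  have hI₀card : I₀.card = W.countP (fun x => decide (x = M)) := by
    rw [← countP_mem_card I₀ n hI₀sub, hcard]
  have hlen : w₀.length + I₀.card = n := by
    have := List.length_eq_countP_add_countP (fun x => decide (x = M)) (l := W)
    have hc : W.countP (fun x => decide (x ≠ M))
        = W.countP (fun a => decide ¬(decide (a = M)) = true) := by
      apply List.countP_congr; intro x _; simp
    rw [hI₀card, hw₀, ← List.countP_eq_length_filter, hc]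
    omega
  have hcnt : ∀ j, j ≤ n → (List.range j).countP (fun k => decide (k + 1 ∉ I₀))
      = (List.range j).countP (fun k => decide (W.getD k 0 ≠ M)) := by
    intro j hj
    apply List.countP_congr
    intro k hk
    rw [List.mem_range] at hk
    simp only [decide_eq_true_eq]
    rw [kI' k (by omega)]
  have hphi0 : W = phi I₀ w₀ := by
    apply List.ext_getElem
    · rw [phi_length, hlen]
    · intro j h1 h2
      rw [← List.getD_eq_getElem W 0 h1, ← List.getD_eq_getElem _ 0 h2,
        phi_getD I₀ w₀ j (by rw [hlen]; exact h1)]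
      by_cases hj : W.getD j 0 = M
      · rw [if_pos ((kI' j h1).2 hj), hw₀max, hj]
      · rw [if_neg (fun hc => hj ((kI' j h1).1 hc)), hcnt j (by omega)]
        exact (filter_getD (fun x => decide (x ≠ M)) W j h1 (by simpa using hj)).symm
  obtain ⟨jm, hjmlt, hjmv⟩ : ∃ j, j < n ∧ W.getD j 0 = M := by
    have hMmem : M ∈ W := hW.2 M hM1 le_rfl
    obtain ⟨j, hj, hjv⟩ := List.mem_iff_getElem.mp hMmem
    exact ⟨j, hj, by rw [List.getD_eq_getElem _ _ hj]; exact hjv⟩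
  have hI₀ne : I₀.Nonempty := ⟨jm + 1, (kI' jm hjmlt).2 hjmv⟩
  have hget0 : ∀ j, j < n → W.getD j 0 =
      if j + 1 ∈ I₀ then wmax w₀ + 1
      else w₀.getD ((List.range j).countP (fun k => decide (k + 1 ∉ I₀))) 0 := by
    intro j hj
    conv_lhs => rw [hphi0]
    exact phi_getD I₀ w₀ j (by omega)
  refine ⟨(I₀, w₀), ⟨hI₀ne, hI₀sub, hw₀packed, hphi0⟩, ?_⟩
  rintro ⟨I, w⟩ ⟨hIne, hIsub, hwp, hphi'⟩
  -- derived facts about (I, w)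
  have hlen' : n = w.length + I.card := by rw [hn, hphi', phi_length]
  have hget : ∀ j, j < n → W.getD j 0 =
      if j + 1 ∈ I then wmax w + 1
      else w.getD ((List.range j).countP (fun k => decide (k + 1 ∉ I))) 0 := by
    intro j hj
    conv_lhs => rw [hphi']
    exact phi_getD I w j (by omega)
  have hMw : wmax w + 1 = M := by
    have h1 : M ≤ wmax w + 1 := by
      apply wmax_le
      intro x hx
      obtain ⟨j, hj, hjv⟩ := List.mem_iff_getElem.mp hx
      have := hget j hj
      rw [List.getD_eq_getElem _ _ hj, hjv] at this
      rw [this]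
      split
      · exact le_rfl
      · exact le_trans (getD_le_wmax w _) (by omega)
    have h2 : wmax w + 1 ≤ M := by
      obtain ⟨i, hi⟩ := hIne
      have hib := Finset.mem_Icc.mp (hIsub hi)
      have hj : i - 1 < n := by omega
      have := hget (i - 1) hj
      rw [if_pos (by rwa [Nat.sub_add_cancel hib.1])] at this
      have hmem : W.getD (i - 1) 0 ∈ W := by
        rw [List.getD_eq_getElem _ _ hj]; exact List.getElem_mem hj
      rw [this] at hmem
      exact le_wmax hmem
    omega
  have hII : I = I₀ := by
    apply Finset.ext
    intro i
    rw [kI]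
    constructor
    · intro hi
      have hib := Finset.mem_Icc.mp (hIsub hi)
      have hj : i - 1 < n := by omega
      have := hget (i - 1) hj
      rw [if_pos (by rwa [Nat.sub_add_cancel hib.1]), hMw] at this
      exact ⟨hib.1, hib.2, this⟩
    · rintro ⟨h1, h2, h3⟩
      by_contra hiI
      have hj : i - 1 < n := by omega
      have := hget (i - 1) hj
      rw [if_neg (by rwa [Nat.sub_add_cancel h1])] at this
      have := getD_le_wmax w ((List.range (i - 1)).countP (fun k => decide (k + 1 ∉ I)))
      omega
  have hww : w = w₀ := by
    apply List.ext_getElem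
    · have : I.card = I₀.card := by rw [hII]
      omega
    · intro c hc1 hc2
      have hcount : (List.range n).countP (fun k => decide (k + 1 ∉ I₀)) = w.length := by
        rw [countP_not_mem I₀ n hI₀sub, ← hII]
        omega
      obtain ⟨j, hj, hcj, hPj⟩ := exists_pos (fun k => decide (k + 1 ∉ I₀)) n c
        (by rw [hcount]; exact hc1)
      have hjI : j + 1 ∉ I₀ := by simpa using hPj
      have e1 := hget j hj
      rw [hII] at e1
      rw [if_neg hjI, hcj] at e1
      have e2 := hget0 j hj
      rw [if_neg hjI, hcj] at e2
      have e3 : w.getD c 0 = w₀.getD c 0 := e1.symm.trans e2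
      rw [List.getD_eq_getElem _ _ hc1, List.getD_eq_getElem _ _ hc2] at e3
      exact e3
  rw [Prod.mk.injEq]
  exact ⟨hII, hww⟩
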